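/- Let n be a positive integer, h ≥ 1 a real number, κ > 0, and μ a Borel measure on ℝ^n homogeneous of degree h. Let V be a Borel subset of the unit L¹ sphere {x ∈ ℝ^n : ‖x‖₁ = 1} with μ((0,1]·V) < ∞, and let f : ℝ^n → ℝ be a linear functional with |f(x) − f(y)| ≤ K·‖x − y‖₁ for all x, y and f(u) ≥ c for all u ∈ V, where K ≥ 0 and c > 0. Let Γ ⊆ (0,∞)·V be a set such that {x ∈ Γ : f(x) ≤ L} is finite for every L, and let a ≥ 0, C₀ > 0, C₁ ≥ 0 be constants. Assume that for every δ ∈ (0,1] there exists a finite partition {U_i}_{i=1}^N of V into Borel sets with N ≤ C₀·δ^(−h) and diam₁(U_i) ≤ δ for every i, such that for every i and every L ≥ 1, writing m_i := inf_{U_i} f and M_i := sup_{U_i} f, the two-sided estimate a·μ((0,1]·U_i)·(L/M_i)^h − C₁·L^(h−κ) ≤ #{x ∈ Γ ∩ (0,∞)·U_i : f(x) ≤ L} ≤ a·μ((0,1]·U_i)·(L/m_i)^h + C₁·L^(h−κ) holds. Then, setting v := μ({x ∈ (0,∞)·V : f(x) ≤ 1}) and κ' := κ/(h+1), there exists a constant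 C₂ ≥ 0 (depending only on a, h, K, c, μ((0,1]·V), C₀, C₁) such that for every L ≥ 1, |#{x ∈ Γ : f(x) ≤ L} − a·v·L^h| ≤ C₂·L^(h−κ'). -/

import Mathlib

open MeasureTheory Set Pointwise

/-- The `L¹` norm on `ℝ^n`. -/
noncomputable def norm1 {n : ℕ} (x : Fin n → ℝ) : ℝ := ∑ i, |x i|

lemma norm1_smul {n : ℕ} (t : ℝ) (x : Fin n → ℝ) : norm1 (t • x) = |t| * norm1 x := by
  simp [norm1, abs_mul, Finset.mul_sum]

lemma continuous_norm1 {n : ℕ} : Continuous (norm1 (n := n)) := by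
  exact continuous_finset_sum _ fun i _ => (continuous_apply i).abs

lemma measurable_norm1 {n : ℕ} : Measurable (norm1 (n := n)) := continuous_norm1.measurable

lemma cone_mem {n : ℕ} {V : Set (Fin n → ℝ)} (hV : ∀ x ∈ V, norm1 x = 1)
    {S : Set ℝ} (hS : S ⊆ Set.Ioi 0) {x : Fin n → ℝ} :
    x ∈ S • V ↔ norm1 x ∈ S ∧ (norm1 x)⁻¹ • x ∈ V := by
  constructor
  · rintro hx
    obtain ⟨t, ht, u, hu, rfl⟩ := Set.mem_smul.1 hx
    have ht0 : 0 < t := hS ht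
    have hn : norm1 (t • u) = t := by
      rw [norm1_smul, hV u hu, abs_of_pos ht0, mul_one]
    rw [hn]
    refine ⟨ht, ?_⟩
    rw [smul_smul, inv_mul_cancel₀ ht0.ne', one_smul]
    exact hu
  · rintro ⟨h1, h2⟩
    have h0 : 0 < norm1 x := hS h1
    refine Set.mem_smul.2 ⟨norm1 x, h1, (norm1 x)⁻¹ • x, h2, ?_⟩
    rw [smul_smul, mul_inv_cancel₀ h0.ne', one_smul]

lemma cone_measurable {n : ℕ} {V : Set (Fin n → ℝ)} (hV : ∀ x ∈ V, norm1 x = 1)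
    (hVm : MeasurableSet V) {S : Set ℝ} (hS : S ⊆ Set.Ioi 0) (hSm : MeasurableSet S) :
    MeasurableSet (S • V) := by
  have : S • V = norm1 ⁻¹' S ∩ (fun x : Fin n → ℝ => (norm1 x)⁻¹ • x) ⁻¹' V := by
    ext x; simpa using cone_mem hV hS
  rw [this]
  refine (measurable_norm1 hSm).inter ?_
  have hm : Measurable (fun x : Fin n → ℝ => (norm1 x)⁻¹ • x) := by
    apply measurable_pi_lambda
    intro i
    exact (measurable_norm1.inv).mul (measurable_pi_apply i)
  exact hm hVm

-- disjointness
lemma cone_disjoint {n : ℕ} {A B : Set (Fin n → ℝ)} (hA : ∀ x ∈ A, norm1 x = 1)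
    (hB : ∀ x ∈ B, norm1 x = 1) {S : Set ℝ} (hS : S ⊆ Set.Ioi 0)
    (hd : Disjoint A B) : Disjoint (S • A) (S • B) := by
  rw [Set.disjoint_left]
  intro x hxA hxB
  have h1 := (cone_mem hA hS).1 hxA
  have h2 := (cone_mem hB hS).1 hxB
  exact Set.disjoint_left.1 hd h1.2 h2.2

-- scaling: t • (Ioc 0 1 • U) = Ioc 0 t • U
lemma smul_cone {n : ℕ} {t : ℝ} (ht : 0 < t) (U : Set (Fin n → ℝ)) :
    t • (Set.Ioc (0:ℝ) 1 • U) = Set.Ioc (0:ℝ) t • U := by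
  ext x
  constructor
  · rintro hx
    obtain ⟨y, hy, rfl⟩ := Set.mem_smul_set.1 hx
    obtain ⟨s, hs, u, hu, rfl⟩ := Set.mem_smul.1 hy
    rw [smul_smul]
    exact Set.mem_smul.2 ⟨t * s, ⟨mul_pos ht hs.1, by nlinarith [hs.1, hs.2]⟩, u, hu, rfl⟩
  · rintro hx
    obtain ⟨r, hr, u, hu, rfl⟩ := Set.mem_smul.1 hx
    refine Set.mem_smul_set.2 ⟨(r / t) • u, Set.mem_smul.2 ⟨r / t, ⟨div_pos hr.1 ht, (div_le_one ht).2 hr.2⟩, u, hu, rfl⟩, ?_⟩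
    rw [smul_smul, mul_div_cancel₀ _ ht.ne']

lemma ncard_iUnion_fin {α : Type*} {N : ℕ} (C : Fin N → Set α) (hfin : ∀ i, (C i).Finite)
    (hdisj : Pairwise (Function.onFun Disjoint C)) :
    (⋃ i, C i).ncard = ∑ i, (C i).ncard := by
  classical
  have h1 : (⋃ i, C i) = ↑(Finset.univ.biUnion fun i => (hfin i).toFinset) := by
    simp [Set.Finite.coe_toFinset]
  rw [h1, Set.ncard_coe_finset, Finset.card_biUnion]
  · exact Finset.sum_congr rfl fun i _ => (Set.ncard_eq_toFinset_card (C i) (hfin i)).symm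
  · intro i _ j _ hij
    exact Set.Finite.disjoint_toFinset.2 (hdisj hij)

lemma key_ineq {h c m M d : ℝ} (hh : 1 ≤ h) (hc : 0 < c) (hcm : c ≤ m) (hmM : m ≤ M)
    (hMd : M ≤ m + d) (hd : 0 ≤ d) :
    m ^ (-h) - M ^ (-h) ≤ h * d * c ^ (-(h+1)) := by
  have hm : 0 < m := hc.trans_le hcm
  have hM : 0 < M := hm.trans_le hmM
  have ht0 : (0:ℝ) ≤ (M - m)/M := by
    apply div_nonneg (by linarith) hM.le
  have hb : 1 + h * (-((M-m)/M)) ≤ (1 + (-((M-m)/M))) ^ h := by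
    apply one_add_mul_self_le_rpow_one_add _ hh
    have : (M - m)/M ≤ 1 := by
      rw [div_le_one hM]; linarith
    linarith
  have heq : 1 + (-((M-m)/M)) = m / M := by field_simp; ring
  rw [heq] at hb
  -- so 1 - (m/M)^h ≤ h * (M-m)/M
  have h1 : 1 - (m/M)^h ≤ h * ((M-m)/M) := by linarith
  have hfac : m ^ (-h) - M ^ (-h) = m ^ (-h) * (1 - (m/M)^h) := by
    rw [Real.div_rpow hm.le hM.le, Real.rpow_neg hm.le, Real.rpow_neg hM.le]
    have h2 : (0:ℝ) < m ^ h := Real.rpow_pos_of_pos hm h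
    have h3 : (0:ℝ) < M ^ h := Real.rpow_pos_of_pos hM h
    field_simp
  rw [hfac]
  have hle1 : m ^ (-h) ≤ c ^ (-h) := Real.rpow_le_rpow_of_nonpos hc hcm (by linarith)
  have hle2 : (M - m)/M ≤ d / c := by
    apply div_le_div₀ hd (by linarith) hc (le_trans hcm hmM)
  have hnn : (0:ℝ) ≤ 1 - (m/M)^h := by
    have : (m/M)^h ≤ 1 := by
      apply Real.rpow_le_one (by positivity) ((div_le_one hM).2 hmM) (by linarith)
    linarith
  calc m ^ (-h) * (1 - (m/M)^h) ≤ c ^ (-h) * (h * (d / c)) := by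
        apply mul_le_mul hle1 (h1.trans (by
          have := mul_le_mul_of_nonneg_left hle2 (le_trans zero_le_one hh)
          linarith)) hnn (le_of_lt (Real.rpow_pos_of_pos hc _))
    _ = h * d * c ^ (-(h+1)) := by
        rw [show -(h+1) = (-h) + (-1) by ring, Real.rpow_add hc, Real.rpow_neg_one]
        field_simp

/-- Abstract effective counting (Proposition 3.7): suppose `μ` is a degree-`h` homogeneous
Borel measure on `ℝ^n` (`h ≥ 1`), `V` is a Borel subset of the unit `L¹` sphere with
`μ((0,1]·V) < ∞`, `f` is a linear functional, `K`-Lipschitz for `‖·‖₁` and `≥ c > 0` on `V`,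
and `Γ ⊆ (0,∞)·V` has finite sublevel sets for `f`. If for every `δ ∈ (0,1]` there is a
Borel partition of `V` into `N ≤ C₀·δ⁻ʰ` cells of `L¹`-diameter `≤ δ` on each of which the
two-sided per-cell counting estimate holds with error `C₁·L^(h−κ)`, then with
`v := μ {x ∈ (0,∞)·V | f x ≤ 1}` and `κ' := κ/(h+1)` there is `C₂ ≥ 0` with
`|#{x ∈ Γ | f x ≤ L} − a·v·Lʰ| ≤ C₂·L^(h−κ')` for all `L ≥ 1`. -/
theorem abstract_effective_count
    (n : ℕ) (hn : 0 < n) (h κ : ℝ) (hh : 1 ≤ h) (hκ : 0 < κ)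
    (μ : Measure (Fin n → ℝ))
    (hhom : ∀ t : ℝ, 0 < t → ∀ A : Set (Fin n → ℝ), MeasurableSet A →
      μ (t • A) = ENNReal.ofReal (t ^ h) * μ A)
    (V : Set (Fin n → ℝ)) (hVmeas : MeasurableSet V)
    (hVsph : ∀ x ∈ V, norm1 x = 1)
    (hVfin : μ (Set.Ioc (0:ℝ) 1 • V) < ⊤)
    (f : (Fin n → ℝ) →ₗ[ℝ] ℝ) (K c : ℝ) (hK : 0 ≤ K) (hc : 0 < c)
    (hlip : ∀ x y : Fin n → ℝ, |f x - f y| ≤ K * norm1 (x - y))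
    (hlow : ∀ u ∈ V, c ≤ f u)
    (Γ : Set (Fin n → ℝ)) (hΓ : Γ ⊆ Set.Ioi (0:ℝ) • V)
    (hΓfin : ∀ L : ℝ, {x ∈ Γ | f x ≤ L}.Finite)
    (a C₀ C₁ : ℝ) (ha : 0 ≤ a) (hC₀ : 0 < C₀) (hC₁ : 0 ≤ C₁)
    (hpart : ∀ δ ∈ Set.Ioc (0:ℝ) 1, ∃ (N : ℕ) (U : Fin N → Set (Fin n → ℝ)),
      (∀ i, MeasurableSet (U i)) ∧
      (∀ i, (U i).Nonempty) ∧
      V = ⋃ i, U i ∧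
      Pairwise (Function.onFun Disjoint U) ∧
      (N : ℝ) ≤ C₀ * δ ^ (-h) ∧
      (∀ i, ∀ x ∈ U i, ∀ y ∈ U i, norm1 (x - y) ≤ δ) ∧
      (∀ i, ∀ L : ℝ, 1 ≤ L →
        a * (μ (Set.Ioc (0:ℝ) 1 • U i)).toReal * (L / sSup (f '' U i)) ^ h
            - C₁ * L ^ (h - κ) ≤
          ({x ∈ Γ ∩ Set.Ioi (0:ℝ) • U i | f x ≤ L}.ncard : ℝ) ∧
        ({x ∈ Γ ∩ Set.Ioi (0:ℝ) • U i | f x ≤ L}.ncard : ℝ) ≤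
          a * (μ (Set.Ioc (0:ℝ) 1 • U i)).toReal * (L / sInf (f '' U i)) ^ h
            + C₁ * L ^ (h - κ))) :
    ∃ C₂ : ℝ, 0 ≤ C₂ ∧ ∀ L : ℝ, 1 ≤ L →
      |({x ∈ Γ | f x ≤ L}.ncard : ℝ) -
          a * (μ {x ∈ Set.Ioi (0:ℝ) • V | f x ≤ 1}).toReal * L ^ h| ≤
        C₂ * L ^ (h - κ / (h + 1)) := by
  classical
  have hfc : Continuous f := f.continuous_of_finiteDimensional
  have hIoc : (Set.Ioc (0:ℝ) 1 : Set ℝ) ⊆ Set.Ioi 0 := fun x hx => hx.1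
  have hIoiS : (Set.Ioi (0:ℝ) : Set ℝ) ⊆ Set.Ioi 0 := fun x hx => hx
  have hIocs : ∀ s : ℝ, (Set.Ioc (0:ℝ) s : Set ℝ) ⊆ Set.Ioi 0 := fun s x hx => hx.1
  set v : ℝ := (μ {x ∈ Set.Ioi (0:ℝ) • V | f x ≤ 1}).toReal with hv
  set μV : ℝ := (μ (Set.Ioc (0:ℝ) 1 • V)).toReal with hμV
  have hμV0 : 0 ≤ μV := ENNReal.toReal_nonneg
  have hch : (0:ℝ) < c ^ (-(h+1)) := Real.rpow_pos_of_pos hc _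
  refine ⟨a * μV * (h * K * c ^ (-(h+1))) + C₀ * C₁, by positivity, ?_⟩
  intro L hL
  have hL0 : (0:ℝ) < L := lt_of_lt_of_le one_pos hL
  set κ' : ℝ := κ / (h + 1) with hκ'def
  have hh1 : (0:ℝ) < h + 1 := by linarith
  have hκ'0 : 0 < κ' := div_pos hκ hh1
  set δ : ℝ := L ^ (-κ') with hδdef
  have hδ0 : 0 < δ := Real.rpow_pos_of_pos hL0 _
  have hδ1 : δ ≤ 1 := Real.rpow_le_one_of_one_le_of_nonpos hL (by linarith)
  obtain ⟨N, U, hUm, hUne, hUcover, hUdisj, hN, hUdiam, hUest⟩ := hpart δ ⟨hδ0, hδ1⟩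
  have hUsub : ∀ i, U i ⊆ V := fun i => hUcover ▸ Set.subset_iUnion U i
  have hUsph : ∀ i, ∀ x ∈ U i, norm1 x = 1 := fun i x hx => hVsph x (hUsub i hx)
  -- cell measure quantities
  set μc : Fin N → ℝ := fun i => (μ (Set.Ioc (0:ℝ) 1 • U i)).toReal with hμc
  have hμc0 : ∀ i, 0 ≤ μc i := fun i => ENNReal.toReal_nonneg
  have hconemeas : ∀ i, MeasurableSet (Set.Ioc (0:ℝ) 1 • U i) :=
    fun i => cone_measurable (hUsph i) (hUm i) hIoc measurableSet_Ioc
  have hconeV : MeasurableSet (Set.Ioc (0:ℝ) 1 • V) :=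
    cone_measurable hVsph hVmeas hIoc measurableSet_Ioc
  have hconeiV : MeasurableSet (Set.Ioi (0:ℝ) • V) :=
    cone_measurable hVsph hVmeas hIoiS measurableSet_Ioi
  have hconei : ∀ i, MeasurableSet (Set.Ioi (0:ℝ) • U i) :=
    fun i => cone_measurable (hUsph i) (hUm i) hIoiS measurableSet_Ioi
  have hsubV : ∀ i, Set.Ioc (0:ℝ) 1 • U i ⊆ Set.Ioc (0:ℝ) 1 • V :=
    fun i => Set.smul_subset_smul_left (hUsub i)
  have hfinc : ∀ i, μ (Set.Ioc (0:ℝ) 1 • U i) ≠ ⊤ :=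
    fun i => ((measure_mono (hsubV i)).trans_lt hVfin).ne
  -- inf and sup of f on cells
  set m : Fin N → ℝ := fun i => sInf (f '' U i) with hm
  set Mf : Fin N → ℝ := fun i => sSup (f '' U i) with hMf
  have hcell : ∀ i, c ≤ m i ∧ Mf i ≤ m i + K * δ ∧ ∀ u ∈ U i, m i ≤ f u ∧ f u ≤ Mf i := by
    intro i
    obtain ⟨u₀, hu₀⟩ := hUne i
    have hbb : BddBelow (f '' U i) := ⟨f u₀ - K * δ, by
      rintro y ⟨u, hu, rfl⟩
      have hd := hUdiam i u₀ hu₀ u hu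
      have h1 : |f u₀ - f u| ≤ K * δ :=
        le_trans (hlip u₀ u) (mul_le_mul_of_nonneg_left hd hK)
      have := abs_le.1 h1
      linarith [this.1, this.2]⟩
    have hba : BddAbove (f '' U i) := ⟨f u₀ + K * δ, by
      rintro y ⟨u, hu, rfl⟩
      have hd := hUdiam i u hu u₀ hu₀
      have h1 : |f u - f u₀| ≤ K * δ :=
        le_trans (hlip u u₀) (mul_le_mul_of_nonneg_left hd hK)
      have := abs_le.1 h1
      linarith [this.1, this.2]⟩
    have hmem : ∀ u ∈ U i, m i ≤ f u ∧ f u ≤ Mf i := fun u hu =>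
      ⟨csInf_le hbb ⟨u, hu, rfl⟩, le_csSup hba ⟨u, hu, rfl⟩⟩
    refine ⟨le_csInf ((hUne i).image f) ?_, ?_, hmem⟩
    · rintro y ⟨u, hu, rfl⟩; exact hlow u (hUsub i hu)
    · apply csSup_le ((hUne i).image f)
      rintro y ⟨u, hu, rfl⟩
      have key : ∀ w ∈ U i, f u - K * δ ≤ f w := by
        intro w hw
        have hd := hUdiam i u hu w hw
        have h1 : |f u - f w| ≤ K * δ :=
          le_trans (hlip u w) (mul_le_mul_of_nonneg_left hd hK)
        have := abs_le.1 h1; linarith [this.2]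
      have h2 : f u - K * δ ≤ m i :=
        le_csInf ((hUne i).image f) (by rintro y ⟨w, hw, rfl⟩; exact key w hw)
      linarith
  have hm0 : ∀ i, 0 < m i := fun i => lt_of_lt_of_le hc (hcell i).1
  have hM0 : ∀ i, 0 < Mf i := fun i => by
    obtain ⟨u, hu⟩ := hUne i
    exact lt_of_lt_of_le (hm0 i) (le_trans ((hcell i).2.2 u hu).1 ((hcell i).2.2 u hu).2)
  -- scaling of measures
  have hscale : ∀ (W : Set (Fin n → ℝ)), MeasurableSet (Set.Ioc (0:ℝ) 1 • W) →
      ∀ s : ℝ, 0 < s →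
      μ (Set.Ioc (0:ℝ) s • W) = ENNReal.ofReal (s ^ h) * μ (Set.Ioc (0:ℝ) 1 • W) := by
    intro W hW s hs
    rw [← smul_cone hs W, hhom s hs _ hW]
  -- sublevel set containments
  have hsepeq : ∀ (A : Set (Fin n → ℝ)) (L' : ℝ),
      {x ∈ A | f x ≤ L'} = A ∩ f ⁻¹' Set.Iic L' := by
    intro A L'; ext x; simp [Set.mem_sep_iff, Set.mem_preimage, Set.mem_Iic]
  have hupperGen : ∀ (W : Set (Fin n → ℝ)) (b : ℝ), 0 < b → (∀ u ∈ W, b ≤ f u) →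
      ∀ L' : ℝ, {x ∈ Set.Ioi (0:ℝ) • W | f x ≤ L'} ⊆ Set.Ioc (0:ℝ) (L'/b) • W := by
    rintro W b hb hbW L' x ⟨hx, hxf⟩
    obtain ⟨t, ht, u, hu, rfl⟩ := Set.mem_smul.1 hx
    have ht0 : (0:ℝ) < t := ht
    have hfu : b ≤ f u := hbW u hu
    have hfx : f (t • u) = t * f u := by rw [LinearMap.map_smul, smul_eq_mul]
    refine Set.mem_smul.2 ⟨t, ⟨ht0, ?_⟩, u, hu, rfl⟩
    rw [le_div_iff₀ hb]
    nlinarith [hxf, hfx]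
  have hlowerGen : ∀ (W : Set (Fin n → ℝ)) (b : ℝ), 0 < b → (∀ u ∈ W, 0 ≤ f u ∧ f u ≤ b) →
      ∀ L' : ℝ, 0 < L' →
      Set.Ioc (0:ℝ) (L'/b) • W ⊆ {x ∈ Set.Ioi (0:ℝ) • W | f x ≤ L'} := by
    rintro W b hb hbW L' hL' x hx
    obtain ⟨t, ht, u, hu, rfl⟩ := Set.mem_smul.1 hx
    have hfx : f (t • u) = t * f u := by rw [LinearMap.map_smul, smul_eq_mul]
    refine ⟨Set.mem_smul.2 ⟨t, ht.1, u, hu, rfl⟩, ?_⟩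
    have h1 := (hbW u hu).1
    have h2 := (hbW u hu).2
    have h3 : t * f u ≤ (L'/b) * b := by
      apply mul_le_mul ht.2 h2 h1 (by positivity)
    rw [div_mul_cancel₀ _ hb.ne'] at h3
    rw [hfx]; exact h3
  -- sublevel sets per cell
  set D : Fin N → Set (Fin n → ℝ) := fun i => {x ∈ Set.Ioi (0:ℝ) • U i | f x ≤ L} with hD
  have hDmeas : ∀ i, MeasurableSet (D i) := by
    intro i
    have : D i = (Set.Ioi (0:ℝ) • U i) ∩ f ⁻¹' Set.Iic L := hsepeq _ _
    rw [this]
    exact (hconei i).inter (hfc.measurable measurableSet_Iic)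
  have hDup : ∀ i, D i ⊆ Set.Ioc (0:ℝ) (L / m i) • U i :=
    fun i => hupperGen (U i) (m i) (hm0 i) (fun u hu => ((hcell i).2.2 u hu).1) L
  have hDlo : ∀ i, Set.Ioc (0:ℝ) (L / Mf i) • U i ⊆ D i :=
    fun i => hlowerGen (U i) (Mf i) (hM0 i)
      (fun u hu => ⟨le_of_lt (lt_of_lt_of_le (hm0 i) ((hcell i).2.2 u hu).1),
        ((hcell i).2.2 u hu).2⟩) L hL0
  have hDfin : ∀ i, μ (D i) ≠ ⊤ := by
    intro i
    have h1 := measure_mono (μ := μ) (hDup i)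
    rw [hscale (U i) (hconemeas i) _ (div_pos hL0 (hm0 i))] at h1
    exact (h1.trans_lt (ENNReal.mul_lt_top ENNReal.ofReal_lt_top (hfinc i).lt_top)).ne
  set ν : Fin N → ℝ := fun i => (μ (D i)).toReal with hν
  have hν0 : ∀ i, 0 ≤ ν i := fun i => ENNReal.toReal_nonneg
  have hνup : ∀ i, ν i ≤ (L / m i) ^ h * μc i := by
    intro i
    have h1 := measure_mono (μ := μ) (hDup i)
    rw [hscale (U i) (hconemeas i) _ (div_pos hL0 (hm0 i))] at h1
    have h2 := (ENNReal.toReal_le_toReal (hDfin i)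
      (ENNReal.mul_ne_top ENNReal.ofReal_ne_top (hfinc i))).2 h1
    rwa [ENNReal.toReal_mul, ENNReal.toReal_ofReal
      (Real.rpow_nonneg (le_of_lt (div_pos hL0 (hm0 i))) _)] at h2
  have hνlo : ∀ i, (L / Mf i) ^ h * μc i ≤ ν i := by
    intro i
    have h1 := measure_mono (μ := μ) (hDlo i)
    rw [hscale (U i) (hconemeas i) _ (div_pos hL0 (hM0 i))] at h1
    have h2 := (ENNReal.toReal_le_toReal
      (ENNReal.mul_ne_top ENNReal.ofReal_ne_top (hfinc i)) (hDfin i)).2 h1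
    rwa [ENNReal.toReal_mul, ENNReal.toReal_ofReal
      (Real.rpow_nonneg (le_of_lt (div_pos hL0 (hM0 i))) _)] at h2
  -- decomposition of the big sublevel set
  have hconeVU : Set.Ioi (0:ℝ) • V = ⋃ i, Set.Ioi (0:ℝ) • U i := by
    rw [hUcover, Set.smul_iUnion]
  have hDV : {x ∈ Set.Ioi (0:ℝ) • V | f x ≤ L} = ⋃ i, D i := by
    rw [hsepeq _ L, hconeVU, Set.iUnion_inter]
    exact Set.iUnion_congr fun i => (hsepeq _ L).symm
  have hconedisj : Pairwise (Function.onFun Disjoint fun i => Set.Ioi (0:ℝ) • U i) :=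
    fun i j hij => cone_disjoint (hUsph i) (hUsph j) hIoiS (hUdisj hij)
  have hDdisj : Pairwise (Function.onFun Disjoint D) := by
    intro i j hij
    exact Disjoint.mono (Set.sep_subset _ _) (Set.sep_subset _ _) (hconedisj hij)
  have hDVsum : μ {x ∈ Set.Ioi (0:ℝ) • V | f x ≤ L} = ∑ i, μ (D i) := by
    rw [hDV, measure_iUnion hDdisj hDmeas, tsum_fintype]
  -- scaling to v
  have hsubscale : {x ∈ Set.Ioi (0:ℝ) • V | f x ≤ L}
      = L • {x ∈ Set.Ioi (0:ℝ) • V | f x ≤ 1} := by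
    ext x
    constructor
    · rintro ⟨hx, hxf⟩
      refine Set.mem_smul_set.2 ⟨L⁻¹ • x, ⟨?_, ?_⟩, ?_⟩
      · obtain ⟨t, ht, u, hu, rfl⟩ := Set.mem_smul.1 hx
        rw [smul_smul]
        exact Set.mem_smul.2 ⟨L⁻¹ * t, mul_pos (inv_pos.2 hL0) ht, u, hu, rfl⟩
      · rw [LinearMap.map_smul, smul_eq_mul]
        have h1 : L⁻¹ * f x ≤ L⁻¹ * L :=
          mul_le_mul_of_nonneg_left hxf (le_of_lt (inv_pos.2 hL0))
        rwa [inv_mul_cancel₀ hL0.ne'] at h1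
      · rw [smul_smul, mul_inv_cancel₀ hL0.ne', one_smul]
    · rintro hx
      obtain ⟨y, ⟨hy, hyf⟩, rfl⟩ := Set.mem_smul_set.1 hx
      refine ⟨?_, ?_⟩
      · obtain ⟨t, ht, u, hu, rfl⟩ := Set.mem_smul.1 hy
        rw [smul_smul]
        exact Set.mem_smul.2 ⟨L * t, mul_pos hL0 ht, u, hu, rfl⟩
      · rw [LinearMap.map_smul, smul_eq_mul]
        nlinarith
  have hbase_meas : MeasurableSet {x ∈ Set.Ioi (0:ℝ) • V | f x ≤ 1} := by
    rw [hsepeq]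
    exact hconeiV.inter (hfc.measurable measurableSet_Iic)
  have hDVμ : μ {x ∈ Set.Ioi (0:ℝ) • V | f x ≤ L}
      = ENNReal.ofReal (L ^ h) * μ {x ∈ Set.Ioi (0:ℝ) • V | f x ≤ 1} := by
    rw [hsubscale, hhom L hL0 _ hbase_meas]
  have hvfin : μ {x ∈ Set.Ioi (0:ℝ) • V | f x ≤ 1} ≠ ⊤ := by
    have h1 := measure_mono (μ := μ) (hupperGen V c hc hlow 1)
    rw [hscale V hconeV _ (div_pos one_pos hc)] at h1
    exact (h1.trans_lt (ENNReal.mul_lt_top ENNReal.ofReal_lt_top hVfin)).ne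
  have hvsum : L ^ h * v = ∑ i, ν i := by
    have h1 : (μ {x ∈ Set.Ioi (0:ℝ) • V | f x ≤ L}).toReal = L ^ h * v := by
      rw [hDVμ, ENNReal.toReal_mul,
        ENNReal.toReal_ofReal (Real.rpow_nonneg hL0.le _)]
    rw [← h1, hDVsum, ENNReal.toReal_sum (fun i _ => hDfin i)]
  -- counting decomposition
  set cnt : Fin N → ℝ :=
    fun i => (({x ∈ Γ ∩ Set.Ioi (0:ℝ) • U i | f x ≤ L}).ncard : ℝ) with hcntdef
  have hcellfin : ∀ i, ({x ∈ Γ ∩ Set.Ioi (0:ℝ) • U i | f x ≤ L}).Finite :=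
    fun i => (hΓfin L).subset (fun x hx => ⟨hx.1.1, hx.2⟩)
  have hcntdisj : Pairwise (Function.onFun Disjoint
      fun i => {x ∈ Γ ∩ Set.Ioi (0:ℝ) • U i | f x ≤ L}) :=
    fun i j hij => Disjoint.mono (fun x hx => hx.1.2) (fun x hx => hx.1.2) (hconedisj hij)
  have hcount : (({x ∈ Γ | f x ≤ L}).ncard : ℝ) = ∑ i, cnt i := by
    have hdecomp : {x ∈ Γ | f x ≤ L}
        = ⋃ i, {x ∈ Γ ∩ Set.Ioi (0:ℝ) • U i | f x ≤ L} := by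
      ext x
      simp only [Set.mem_iUnion, Set.mem_sep_iff, Set.mem_inter_iff]
      constructor
      · rintro ⟨hxΓ, hxf⟩
        have hx := hΓ hxΓ
        rw [hconeVU] at hx
        obtain ⟨i, hi⟩ := Set.mem_iUnion.1 hx
        exact ⟨i, ⟨hxΓ, hi⟩, hxf⟩
      · rintro ⟨i, ⟨h1, _⟩, h2⟩
        exact ⟨h1, h2⟩
    rw [hdecomp, ncard_iUnion_fin _ hcellfin hcntdisj]
    push_cast
    rfl
  -- per-cell comparison
  have hkey : ∀ i, |cnt i - a * ν i|
      ≤ a * μc i * (L ^ h * (h * (K * δ) * c ^ (-(h+1)))) + C₁ * L ^ (h - κ) := by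
    intro i
    have hlo' : a * μc i * (L / Mf i) ^ h - C₁ * L ^ (h - κ) ≤ cnt i := (hUest i L hL).1
    have hup' : cnt i ≤ a * μc i * (L / m i) ^ h + C₁ * L ^ (h - κ) := (hUest i L hL).2
    have hmM : m i ≤ Mf i := by
      obtain ⟨u, hu⟩ := hUne i
      exact le_trans ((hcell i).2.2 u hu).1 ((hcell i).2.2 u hu).2
    have hgap : (L / m i) ^ h - (L / Mf i) ^ h
        ≤ L ^ h * (h * (K * δ) * c ^ (-(h+1))) := by
      have hki := key_ineq hh hc (hcell i).1 hmM (hcell i).2.1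
        (mul_nonneg hK hδ0.le)
      have e1 : (L / m i) ^ h = L ^ h * (m i) ^ (-h) := by
        rw [Real.div_rpow hL0.le (hm0 i).le, Real.rpow_neg (hm0 i).le, div_eq_mul_inv]
      have e2 : (L / Mf i) ^ h = L ^ h * (Mf i) ^ (-h) := by
        rw [Real.div_rpow hL0.le (hM0 i).le, Real.rpow_neg (hM0 i).le, div_eq_mul_inv]
      rw [e1, e2, ← mul_sub]
      exact mul_le_mul_of_nonneg_left hki (Real.rpow_nonneg hL0.le _)
    have hν1 : a * ν i ≤ a * μc i * (L / m i) ^ h := by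
      calc a * ν i ≤ a * ((L / m i) ^ h * μc i) :=
            mul_le_mul_of_nonneg_left (hνup i) ha
        _ = a * μc i * (L / m i) ^ h := by ring
    have hν2 : a * μc i * (L / Mf i) ^ h ≤ a * ν i := by
      calc a * μc i * (L / Mf i) ^ h = a * ((L / Mf i) ^ h * μc i) := by ring
        _ ≤ a * ν i := mul_le_mul_of_nonneg_left (hνlo i) ha
    have hb1 : a * μc i * (L / m i) ^ h - a * μc i * (L / Mf i) ^ h
        ≤ a * μc i * (L ^ h * (h * (K * δ) * c ^ (-(h+1)))) := by
      have h2 := mul_le_mul_of_nonneg_left hgap (mul_nonneg ha (hμc0 i))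
      calc a * μc i * (L / m i) ^ h - a * μc i * (L / Mf i) ^ h
          = a * μc i * ((L / m i) ^ h - (L / Mf i) ^ h) := by ring
        _ ≤ _ := h2
    rw [abs_le]
    constructor <;> linarith
  -- cell measures sum to μV
  have hμVsum : μV = ∑ i, μc i := by
    have h1 : Set.Ioc (0:ℝ) 1 • V = ⋃ i, Set.Ioc (0:ℝ) 1 • U i := by
      rw [hUcover, Set.smul_iUnion]
    have h2 : Pairwise (Function.onFun Disjoint fun i => Set.Ioc (0:ℝ) 1 • U i) :=
      fun i j hij => cone_disjoint (hUsph i) (hUsph j) hIoc (hUdisj hij)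
    rw [hμV, h1, measure_iUnion h2 hconemeas, tsum_fintype,
      ENNReal.toReal_sum (fun i _ => hfinc i)]
  -- exponent arithmetic
  have hκ'eq : κ' * (h + 1) = κ := by
    rw [hκ'def]
    field_simp
  have hexp1 : δ * L ^ h = L ^ (h - κ') := by
    rw [hδdef, ← Real.rpow_add hL0]
    congr 1
    ring
  have hexp2 : δ ^ (-h) * L ^ (h - κ) = L ^ (h - κ') := by
    rw [hδdef, ← Real.rpow_mul hL0.le, ← Real.rpow_add hL0]
    congr 1
    linear_combination hκ'eq
  -- final assembly
  have hE0 : (0:ℝ) ≤ C₁ * L ^ (h - κ) := mul_nonneg hC₁ (Real.rpow_nonneg hL0.le _)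
  have hsum : (({x ∈ Γ | f x ≤ L}).ncard : ℝ) - a * v * L ^ h
      = ∑ i, (cnt i - a * ν i) := by
    rw [hcount, Finset.sum_sub_distrib, ← Finset.mul_sum, ← hvsum]
    ring
  rw [hsum]
  calc |∑ i, (cnt i - a * ν i)| ≤ ∑ i, |cnt i - a * ν i| :=
        Finset.abs_sum_le_sum_abs _ _
    _ ≤ ∑ i, (a * μc i * (L ^ h * (h * (K * δ) * c ^ (-(h+1)))) + C₁ * L ^ (h - κ)) :=
        Finset.sum_le_sum (fun i _ => hkey i)
    _ = (∑ i, μc i) * (a * (L ^ h * (h * (K * δ) * c ^ (-(h+1)))))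
        + (N : ℝ) * (C₁ * L ^ (h - κ)) := by
        rw [Finset.sum_add_distrib, Finset.sum_const, Finset.card_univ,
          Fintype.card_fin, nsmul_eq_mul, Finset.sum_mul]
        congr 1
        exact Finset.sum_congr rfl (fun i _ => by ring)
    _ ≤ (∑ i, μc i) * (a * (L ^ h * (h * (K * δ) * c ^ (-(h+1)))))
        + (C₀ * δ ^ (-h)) * (C₁ * L ^ (h - κ)) := by
        have := mul_le_mul_of_nonneg_right hN hE0
        linarith
    _ = a * μV * (h * K * c ^ (-(h+1))) * (δ * L ^ h)
        + C₀ * C₁ * (δ ^ (-h) * L ^ (h - κ)) := by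
        rw [← hμVsum]
        ring
    _ = (a * μV * (h * K * c ^ (-(h+1))) + C₀ * C₁) * L ^ (h - κ') := by
        rw [hexp1, hexp2]
        ring
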